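/- Let ρ > 0 and α > 0 with 2ρα < 1. Define for x ≥ 0 the functions f(x) = 2ρ(1 − 2ρα)^{−1/2} · e^{−x/α} · sinh( (1 − 2ρα)^{1/2} · x/α ) and u(x) = ρ · (1 − e^{−2x/α}). Then: (a) f(x) ≥ 0 for all x ≥ 0 and ∫₀^∞ f(x) dx = 1; and (b) for every x ≥ 0, u(x) = f(x) + ∫₀^x u(x − y)·f(y) dy. -/

import Mathlib

open MeasureTheory

private lemma exp_int_Ioi {b : ℝ} (hb : 0 < b) :
    ∫ x in Set.Ioi (0:ℝ), Real.exp (-(b * x)) = 1 / b := by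
  have hd : ∀ x ∈ Set.Ici (0:ℝ),
      HasDerivAt (fun y => -Real.exp (-(b*y))/b) (Real.exp (-(b*x))) x := by
    intro x _
    have h1 : HasDerivAt (fun y : ℝ => -(b*y)) (-b) x := by
      exact (((hasDerivAt_id x).const_mul b).neg).congr_deriv (by ring)
    have h2 : HasDerivAt (fun y => -Real.exp (-(b*y))/b) (-(Real.exp (-(b*x)) * -b) / b) x :=
      h1.exp.neg.div_const b
    convert h2 using 1
    rw [mul_neg, neg_neg, mul_div_assoc, div_self hb.ne', mul_one]
  have ht : Filter.Tendsto (fun y => -Real.exp (-(b*y))/b) Filter.atTop (nhds 0) := by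
    have h2 : Filter.Tendsto (fun y : ℝ => -(b*y)) Filter.atTop Filter.atBot := by
      have := Filter.Tendsto.const_mul_atTop_of_neg (neg_neg_iff_pos.2 hb)
        (Filter.tendsto_id (α := ℝ))
      simpa [neg_mul] using this
    have := (Real.tendsto_exp_atBot.comp h2).neg.div_const b
    simpa using this
  have hint : IntegrableOn (fun x : ℝ => Real.exp (-(b * x))) (Set.Ioi 0) := by
    simpa [neg_mul] using exp_neg_integrableOn_Ioi (0:ℝ) hb
  have := MeasureTheory.integral_Ioi_of_hasDerivAt_of_tendsto' hd hint ht
  rw [this]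
  simp [neg_div]

theorem macchi_renewal_density
    (ρ α : ℝ) (hρ : 0 < ρ) (hα : 0 < α) (h : 2 * ρ * α < 1) :
    let f : ℝ → ℝ := fun x => 2 * ρ * (Real.sqrt (1 - 2 * ρ * α))⁻¹ *
      Real.exp (-x / α) * Real.sinh (Real.sqrt (1 - 2 * ρ * α) * x / α)
    let u : ℝ → ℝ := fun x => ρ * (1 - Real.exp (-2 * x / α))
    (∀ x ≥ (0 : ℝ), 0 ≤ f x) ∧
    IntegrableOn f (Set.Ioi (0 : ℝ)) ∧
    (∫ x in Set.Ioi (0 : ℝ), f x) = 1 ∧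
    (∀ x ≥ (0 : ℝ), u x = f x + ∫ y in (0 : ℝ)..x, u (x - y) * f y) := by
  intro f u
  set s : ℝ := Real.sqrt (1 - 2 * ρ * α) with hs_def
  have hpos : (0:ℝ) < 1 - 2 * ρ * α := by linarith
  have hs0 : 0 < s := Real.sqrt_pos.2 hpos
  have hs2 : s ^ 2 = 1 - 2 * ρ * α := Real.sq_sqrt hpos.le
  have hs1 : s < 1 := by nlinarith
  set a : ℝ := (1 - s) / α with ha_def
  set b : ℝ := (1 + s) / α with hb_def
  have hαne : α ≠ 0 := hα.ne'
  have ha0 : 0 < a := div_pos (by linarith) hα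
  have hb0 : 0 < b := div_pos (by linarith) hα
  have hρ' : ρ = (1 - s ^ 2) / (2 * α) := by
    rw [hs2]; field_simp; ring
  -- closed form for f
  have hf : ∀ x : ℝ, f x = ρ / s * (Real.exp (-(a * x)) - Real.exp (-(b * x))) := by
    intro x
    have e1 : Real.exp (-x / α) * Real.exp (s * x / α) = Real.exp (-(a * x)) := by
      rw [← Real.exp_add]; congr 1; rw [ha_def]; ring
    have e2 : Real.exp (-x / α) * Real.exp (-(s * x / α)) = Real.exp (-(b * x)) := by
      rw [← Real.exp_add]; congr 1; rw [hb_def]; ring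
    rw [← e1, ← e2]
    show 2 * ρ * s⁻¹ * Real.exp (-x / α) * Real.sinh (s * x / α) = _
    rw [Real.sinh_eq]
    field_simp [hs0.ne']
  constructor
  · -- nonnegativity
    intro x hx
    rw [hf x]
    have hba : 0 ≤ (b - a) * x := by
      have : b - a = 2 * s / α := by rw [ha_def, hb_def]; ring
      rw [this]; positivity
    have : Real.exp (-(b * x)) ≤ Real.exp (-(a * x)) := by
      apply Real.exp_le_exp.2
      nlinarith
    have h1 : 0 ≤ ρ / s := le_of_lt (div_pos hρ hs0)
    nlinarith
  have hint : IntegrableOn f (Set.Ioi (0 : ℝ)) := by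
    have h1 : IntegrableOn (fun x : ℝ => Real.exp (-(a * x))) (Set.Ioi 0) := by
      simpa [neg_mul] using exp_neg_integrableOn_Ioi (0:ℝ) ha0
    have h2 : IntegrableOn (fun x : ℝ => Real.exp (-(b * x))) (Set.Ioi 0) := by
      simpa [neg_mul] using exp_neg_integrableOn_Ioi (0:ℝ) hb0
    have h3 : IntegrableOn (fun x => ρ / s * (Real.exp (-(a * x)) - Real.exp (-(b * x))))
        (Set.Ioi (0:ℝ)) := by
      exact (h1.sub h2).const_mul (ρ / s)
    exact h3.congr_fun (fun x _ => (hf x).symm) measurableSet_Ioi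
  refine ⟨hint, ?_, ?_⟩
  · -- total mass 1
    have h1 : IntegrableOn (fun x : ℝ => Real.exp (-(a * x))) (Set.Ioi 0) := by
      simpa [neg_mul] using exp_neg_integrableOn_Ioi (0:ℝ) ha0
    have h2 : IntegrableOn (fun x : ℝ => Real.exp (-(b * x))) (Set.Ioi 0) := by
      simpa [neg_mul] using exp_neg_integrableOn_Ioi (0:ℝ) hb0
    have heq : ∫ x in Set.Ioi (0:ℝ), f x
        = ρ / s * ((∫ x in Set.Ioi (0:ℝ), Real.exp (-(a * x)))
            - ∫ x in Set.Ioi (0:ℝ), Real.exp (-(b * x))) := by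
      rw [show ∫ x in Set.Ioi (0:ℝ), f x = ∫ x in Set.Ioi (0:ℝ),
          ρ / s * (Real.exp (-(a * x)) - Real.exp (-(b * x))) from
        setIntegral_congr_fun measurableSet_Ioi (fun x _ => hf x)]
      rw [MeasureTheory.integral_const_mul, integral_sub h1 h2]
    rw [heq, exp_int_Ioi ha0, exp_int_Ioi hb0, hρ', ha_def, hb_def]
    have h1s : (1:ℝ) - s ≠ 0 := by linarith
    have h2s : (1:ℝ) + s ≠ 0 := by linarith
    field_simp
    ring
  · -- renewal equation
    intro x hx
    have hab : a + b = 2 / α := by rw [ha_def, hb_def]; field_simp; ring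
    set F : ℝ → ℝ := fun y => ρ^2 / s * (-(Real.exp (-(a*y)))/a + Real.exp (-(b*y))/b
      - Real.exp (-2*x/α) * (Real.exp (b*y)/b - Real.exp (a*y)/a)) with hF_def
    have hderiv : ∀ y : ℝ, HasDerivAt F (u (x - y) * f y) y := by
      intro y
      have d1 : HasDerivAt (fun y : ℝ => -(a*y)) (-a) y := by
        exact (((hasDerivAt_id y).const_mul a).neg).congr_deriv (by ring)
      have d2 : HasDerivAt (fun y : ℝ => -(b*y)) (-b) y := by
        exact (((hasDerivAt_id y).const_mul b).neg).congr_deriv (by ring)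
      have d3 : HasDerivAt (fun y : ℝ => a*y) a y := by
        simpa using (hasDerivAt_id y).const_mul a
      have d4 : HasDerivAt (fun y : ℝ => b*y) b y := by
        simpa using (hasDerivAt_id y).const_mul b
      have D : HasDerivAt F (ρ^2 / s * (-(Real.exp (-(a*y)) * (-a))/a + (Real.exp (-(b*y)) * (-b))/b
          - Real.exp (-2*x/α) * (Real.exp (b*y) * b/b - Real.exp (a*y) * a/a))) y := by
        exact (((d1.exp.neg.div_const a).add (d2.exp.div_const b)).sub
          (((d4.exp.div_const b).sub (d3.exp.div_const a)).const_mul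
            (Real.exp (-2*x/α)))).const_mul (ρ^2 / s)
      convert D using 1
      have key : Real.exp (-2*(x-y)/α) = Real.exp (-2*x/α) * (Real.exp (a*y) * Real.exp (b*y)) := by
        rw [← Real.exp_add, ← Real.exp_add]; congr 1
        have : a * y + b * y = (a + b) * y := by ring
        rw [this, hab]; field_simp; ring
      show u (x - y) * f y = _
      rw [hf y]
      show ρ * (1 - Real.exp (-2 * (x-y) / α)) * _ = _
      rw [key]
      have e1 : Real.exp (-(a*y)) = (Real.exp (a*y))⁻¹ := by
        rw [← Real.exp_neg]
      have e2 : Real.exp (-(b*y)) = (Real.exp (b*y))⁻¹ := by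
        rw [← Real.exp_neg]
      rw [e1, e2]
      have p1 := Real.exp_ne_zero (a*y)
      have p2 := Real.exp_ne_zero (b*y)
      field_simp
      ring
    have hcont : Continuous (fun y => u (x - y) * f y) := by
      have c1 : Continuous (fun y : ℝ => -2 * (x - y) / α) :=
        ((continuous_const.mul (continuous_const.sub continuous_id)).div_const α)
      have c2 : Continuous (fun y : ℝ => -y / α) :=
        (continuous_id.neg.div_const α)
      have c3 : Continuous (fun y : ℝ => s * y / α) :=
        ((continuous_const.mul continuous_id).div_const α)
      exact ((continuous_const.mul
          (continuous_const.sub (Real.continuous_exp.comp c1))).mul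
        (((continuous_const.mul (Real.continuous_exp.comp c2))).mul
          (Real.continuous_sinh.comp c3)))
    have hFTCs := intervalIntegral.integral_eq_sub_of_hasDerivAt
      (fun y _ => hderiv y) (hcont.intervalIntegrable 0 x)
    rw [hFTCs]
    -- final algebra
    rw [hf x]
    show ρ * (1 - Real.exp (-2 * x / α)) = _
    have hE : Real.exp (-2*x/α) = Real.exp (-(a*x)) * Real.exp (-(b*x)) := by
      rw [← Real.exp_add]; congr 1
      have : -(a*x) + -(b*x) = -((a+b)*x) := by ring
      rw [this, hab]; field_simp
    rw [hF_def]
    simp only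
    rw [hE]
    have e1 : Real.exp (a*x) = (Real.exp (-(a*x)))⁻¹ := by
      rw [← Real.exp_neg, neg_neg]
    have e2 : Real.exp (b*x) = (Real.exp (-(b*x)))⁻¹ := by
      rw [← Real.exp_neg, neg_neg]
    rw [e1, e2]
    have p1 := Real.exp_ne_zero (-(a*x))
    have p2 := Real.exp_ne_zero (-(b*x))
    have h1s : (1:ℝ) - s ≠ 0 := by linarith
    have h2s : (1:ℝ) + s ≠ 0 := by linarith
    rw [hρ', ha_def, hb_def]
    simp only [mul_zero, Real.exp_zero]
    field_simp
    simp only [neg_zero, Real.exp_zero]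
    ring
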